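/- Let σ, τ₀, τ₁ be 3×3 permutation matrices and let i : ℕ → {0,1} be eventually periodic (there exist k ≥ 1 and p ≥ 1 with i_{n+p} = i_n for all n ≥ k). If the nested closed triangles Γ_{(σ,τ₀,τ₁)}(i₁,…,iₙ) converge to a single point, i.e. the intersection over all n of Γ_{(σ,τ₀,τ₁)}(i₁,…,iₙ) equals {(α, β)}, then α and β are both rational numbers. -/

import Mathlib

open Matrix MeasureTheory Filter

noncomputable section

/-- Projection π(a,b,c) = (b/a, c/a). -/
def projPt (v : Fin 3 → ℝ) : ℝ × ℝ := (v 1 / v 0, v 2 / v 0)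

def Vmat : Matrix (Fin 3) (Fin 3) ℝ := !![1,1,1; 0,1,1; 0,0,1]

def prodSeq (C : Fin 2 → Matrix (Fin 3) (Fin 3) ℝ) (i : ℕ → Fin 2) :
    ℕ → Matrix (Fin 3) (Fin 3) ℝ
  | 0 => 1
  | n + 1 => prodSeq C i n * C (i (n + 1))

/-- The subtriangle: convex hull of the π-images of the columns of V·C_{i₁}⋯C_{iₙ}. -/
def subTri (C : Fin 2 → Matrix (Fin 3) (Fin 3) ℝ) (i : ℕ → Fin 2) (n : ℕ) :
    Set (ℝ × ℝ) :=
  convexHull ℝ (Set.range fun j : Fin 3 => projPt fun k => (Vmat * prodSeq C i n) k j)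

/-- The permutation matrix of a permutation of {0,1,2}. -/
def permMat (p : Equiv.Perm (Fin 3)) : Matrix (Fin 3) (Fin 3) ℝ :=
  Matrix.of fun i j => if p j = i then 1 else 0

def G0 : Matrix (Fin 3) (Fin 3) ℝ := !![0,0,1/2; 1,0,0; 0,1,1/2]
def G1 : Matrix (Fin 3) (Fin 3) ℝ := !![1,0,1/2; 0,1,0; 0,0,1/2]

/-- The pair of matrices G₀(σ,τ₀,τ₁) = σG₀τ₀, G₁(σ,τ₀,τ₁) = σG₁τ₁. -/
def Gtrip (σ τ0 τ1 : Matrix (Fin 3) (Fin 3) ℝ) : Fin 2 → Matrix (Fin 3) (Fin 3) ℝ :=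
  ![σ * G0 * τ0, σ * G1 * τ1]

namespace TriAux

abbrev M3 := Matrix (Fin 3) (Fin 3) ℝ

def stdS : Set (Fin 3 → ℝ) := {w | (∀ j, 0 ≤ w j) ∧ ∑ j, w j = 1}

/-- column-stochastic with nonnegative entries -/
def colS (A : M3) : Prop := (∀ i j, 0 ≤ A i j) ∧ ∀ j, ∑ i, A i j = 1

lemma colS_one : colS 1 := by
  constructor
  · intro i j
    by_cases h : i = j <;> simp [Matrix.one_apply, h]
  · intro j
    simp [Matrix.one_apply]

lemma colS_mul {A B : M3} (hA : colS A) (hB : colS B) : colS (A * B) := by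
  constructor
  · intro i j
    rw [Matrix.mul_apply]
    exact Finset.sum_nonneg fun k _ => mul_nonneg (hA.1 i k) (hB.1 k j)
  · intro j
    simp only [Matrix.mul_apply]
    rw [Finset.sum_comm]
    have : ∀ k, ∑ i : Fin 3, A i k * B k j = B k j := by
      intro k
      rw [← Finset.sum_mul, hA.2 k, one_mul]
    rw [Finset.sum_congr rfl fun k _ => this k, hB.2 j]

lemma colS_permMat (p : Equiv.Perm (Fin 3)) : colS (permMat p) := by
  constructor
  · intro i j
    simp only [permMat, Matrix.of_apply]
    split <;> norm_num
  · intro j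
    simp [permMat]

lemma colS_G0 : colS G0 := by
  constructor
  · intro i j; fin_cases i <;> fin_cases j <;> norm_num [G0]
  · intro j; rw [Fin.sum_univ_three]; fin_cases j <;> norm_num [G0, Matrix.cons_val_two, Matrix.vecHead, Matrix.vecTail]

lemma colS_G1 : colS G1 := by
  constructor
  · intro i j; fin_cases i <;> fin_cases j <;> norm_num [G1]
  · intro j; rw [Fin.sum_univ_three]; fin_cases j <;> norm_num [G1, Matrix.vecHead, Matrix.vecTail, Matrix.cons_val_two, Matrix.vecHead, Matrix.vecTail]

lemma colS_Gtrip (p q r : Equiv.Perm (Fin 3)) (j : Fin 2) :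
    colS (Gtrip (permMat p) (permMat q) (permMat r) j) := by
  fin_cases j
  · exact colS_mul (colS_mul (colS_permMat p) colS_G0) (colS_permMat q)
  · exact colS_mul (colS_mul (colS_permMat p) colS_G1) (colS_permMat r)

lemma colS_prodSeq (C : Fin 2 → M3) (hC : ∀ j, colS (C j)) (i : ℕ → Fin 2) (n : ℕ) :
    colS (prodSeq C i n) := by
  induction n with
  | zero => exact colS_one
  | succ n ih => exact colS_mul ih (hC _)

/-- rational entries -/
def isRat (A : M3) : Prop := ∃ Aq : Matrix (Fin 3) (Fin 3) ℚ, Aq.map (fun x => (x : ℝ)) = A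

lemma isRat_one : isRat 1 := by
  refine ⟨1, ?_⟩
  ext i j
  by_cases h : i = j <;> simp [Matrix.one_apply, h]

lemma isRat_mul {A B : M3} (hA : isRat A) (hB : isRat B) : isRat (A * B) := by
  obtain ⟨Aq, rfl⟩ := hA
  obtain ⟨Bq, rfl⟩ := hB
  refine ⟨Aq * Bq, ?_⟩
  ext i j
  simp [Matrix.mul_apply, Matrix.map_apply]

lemma isRat_permMat (p : Equiv.Perm (Fin 3)) : isRat (permMat p) := by
  refine ⟨Matrix.of fun i j => if p j = i then 1 else 0, ?_⟩
  ext i j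
  simp only [permMat, Matrix.map_apply, Matrix.of_apply]
  split <;> norm_num

lemma isRat_G0 : isRat G0 := by
  refine ⟨!![0,0,1/2; 1,0,0; 0,1,1/2], ?_⟩
  ext i j
  fin_cases i <;> fin_cases j <;> norm_num [G0]

lemma isRat_G1 : isRat G1 := by
  refine ⟨!![1,0,1/2; 0,1,0; 0,0,1/2], ?_⟩
  ext i j
  fin_cases i <;> fin_cases j <;> norm_num [G1]

lemma isRat_Gtrip (p q r : Equiv.Perm (Fin 3)) (j : Fin 2) :
    isRat (Gtrip (permMat p) (permMat q) (permMat r) j) := by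
  fin_cases j
  · exact isRat_mul (isRat_mul (isRat_permMat p) isRat_G0) (isRat_permMat q)
  · exact isRat_mul (isRat_mul (isRat_permMat p) isRat_G1) (isRat_permMat r)

lemma isRat_prodSeq (C : Fin 2 → M3) (hC : ∀ j, isRat (C j)) (i : ℕ → Fin 2) (n : ℕ) :
    isRat (prodSeq C i n) := by
  induction n with
  | zero => exact isRat_one
  | succ n ih => exact isRat_mul ih (hC _)

lemma isRat_pow {A : M3} (hA : isRat A) (m : ℕ) : isRat (A ^ m) := by
  induction m with
  | zero => simpa [pow_zero] using isRat_one
  | succ m ih => rw [pow_succ]; exact isRat_mul ih hA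

/-- determinants -/
lemma permMat_eq (p : Equiv.Perm (Fin 3)) : permMat p = (p⁻¹).permMatrix ℝ := by
  ext i j
  simp only [permMat, Matrix.of_apply, Equiv.Perm.permMatrix, PEquiv.toMatrix,
    Equiv.toPEquiv, Option.mem_def, PEquiv.coe_mk, Option.some.injEq]
  by_cases h : p j = i
  · rw [if_pos h, if_pos (by simp [Function.comp, ← h])]
  · rw [if_neg h, if_neg (by
      intro hc
      simp only [Function.comp_apply, Option.some.injEq] at hc
      exact h (by rw [← hc]; simp))]

lemma det_permMat_ne (p : Equiv.Perm (Fin 3)) : (permMat p).det ≠ 0 := by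
  rw [permMat_eq, Matrix.det_permutation]
  rcases Int.units_eq_one_or (Equiv.Perm.sign p⁻¹) with h | h <;>
    simp [h]

lemma det_G0_ne : G0.det ≠ 0 := by
  rw [show G0.det = 1/2 by rw [G0, Matrix.det_fin_three]; norm_num [Matrix.cons_val_two, Matrix.vecHead, Matrix.vecTail]]
  norm_num

lemma det_G1_ne : G1.det ≠ 0 := by
  rw [show G1.det = 1/2 by rw [G1, Matrix.det_fin_three]; norm_num [Matrix.vecHead, Matrix.vecTail, Matrix.cons_val_two, Matrix.vecHead, Matrix.vecTail]]
  norm_num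

lemma det_Gtrip_ne (p q r : Equiv.Perm (Fin 3)) (j : Fin 2) :
    (Gtrip (permMat p) (permMat q) (permMat r) j).det ≠ 0 := by
  fin_cases j
  · show ((permMat p * G0 * permMat q)).det ≠ 0
    rw [Matrix.det_mul, Matrix.det_mul]
    exact mul_ne_zero (mul_ne_zero (det_permMat_ne p) det_G0_ne) (det_permMat_ne q)
  · show ((permMat p * G1 * permMat r)).det ≠ 0
    rw [Matrix.det_mul, Matrix.det_mul]
    exact mul_ne_zero (mul_ne_zero (det_permMat_ne p) det_G1_ne) (det_permMat_ne r)

lemma det_prodSeq_ne (C : Fin 2 → M3) (hC : ∀ j, (C j).det ≠ 0) (i : ℕ → Fin 2) (n : ℕ) :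
    (prodSeq C i n).det ≠ 0 := by
  induction n with
  | zero => simp [prodSeq]
  | succ n ih =>
    show ((prodSeq C i n) * C (i (n+1))).det ≠ 0
    rw [Matrix.det_mul]
    exact mul_ne_zero ih (hC _)


lemma prodSeq_congr (C : Fin 2 → M3) (i i' : ℕ → Fin 2) (n : ℕ)
    (h : ∀ m, 1 ≤ m → m ≤ n → i m = i' m) : prodSeq C i n = prodSeq C i' n := by
  induction n with
  | zero => rfl
  | succ n ih =>
    show prodSeq C i n * C (i (n+1)) = prodSeq C i' n * C (i' (n+1))
    rw [ih fun m h1 h2 => h m h1 (Nat.le_succ_of_le h2),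
      h (n+1) (Nat.le_add_left 1 n) le_rfl]

lemma prodSeq_add (C : Fin 2 → M3) (i : ℕ → Fin 2) (a b : ℕ) :
    prodSeq C i (a + b) = prodSeq C i a * prodSeq C (fun n => i (a + n)) b := by
  induction b with
  | zero => simp [prodSeq]
  | succ b ih =>
    have : a + (b + 1) = (a + b) + 1 := by omega
    rw [this]
    show prodSeq C i (a+b) * C (i (a+b+1)) = _
    rw [ih]
    show _ = prodSeq C i a * (prodSeq C (fun n => i (a + n)) b * C (i (a + (b+1))))
    rw [mul_assoc]
    congr 3

lemma periodic_shift {i : ℕ → Fin 2} {k per : ℕ}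
    (hper : ∀ n : ℕ, k ≤ n → i (n + per) = i n) :
    ∀ m s, 1 ≤ s → i (k + m * per + s) = i (k + s) := by
  intro m
  induction m with
  | zero => intro s _; norm_num
  | succ m ih =>
    intro s hs
    have h1 : k + (m+1) * per + s = (k + m * per + s) + per := by ring
    rw [h1, hper _ (by omega), ih s hs]

lemma prodSeq_periodic (C : Fin 2 → M3) {i : ℕ → Fin 2} {k per : ℕ}
    (hper : ∀ n : ℕ, k ≤ n → i (n + per) = i n) (m : ℕ) :
    prodSeq C i (k + m * per)
      = prodSeq C i k * (prodSeq C (fun n => i (k + n)) per) ^ m := by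
  induction m with
  | zero => simp
  | succ m ih =>
    have h1 : k + (m+1) * per = (k + m * per) + per := by ring
    rw [h1, prodSeq_add, ih, prodSeq_congr C (fun n => i (k + m * per + n))
      (fun n => i (k + n)) per (fun s hs _ => periodic_shift hper m s hs),
      mul_assoc, ← pow_succ]

lemma isCompact_stdS : IsCompact stdS := by
  have hb : Bornology.IsBounded stdS := by
    rw [Metric.isBounded_iff_subset_closedBall 0]
    refine ⟨1, fun w hw => ?_⟩
    rw [Metric.mem_closedBall, dist_zero_right]
    rw [pi_norm_le_iff_of_nonneg zero_le_one]
    intro j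
    rw [Real.norm_eq_abs, abs_of_nonneg (hw.1 j)]
    calc w j ≤ ∑ l, w l := Finset.single_le_sum (fun l _ => hw.1 l) (Finset.mem_univ j)
    _ = 1 := hw.2
  have hc : IsClosed stdS := by
    have h1 : IsClosed {w : Fin 3 → ℝ | ∀ j, 0 ≤ w j} := by
      have : {w : Fin 3 → ℝ | ∀ j, 0 ≤ w j} = ⋂ j, {w | 0 ≤ w j} := by
        ext w; simp
      rw [this]
      exact isClosed_iInter fun j => isClosed_le continuous_const (continuous_apply j)
    have h2 : IsClosed {w : Fin 3 → ℝ | ∑ j, w j = 1} :=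
      isClosed_eq (by continuity) continuous_const
    exact h1.inter h2
  exact Metric.isCompact_of_isClosed_isBounded hc hb

lemma mulVec_mem_stdS {A : M3} (hA : colS A) {w : Fin 3 → ℝ} (hw : w ∈ stdS) :
    A.mulVec w ∈ stdS := by
  simp only [stdS, Set.mem_setOf_eq, Matrix.mulVec, dotProduct]
  constructor
  · intro j
    exact Finset.sum_nonneg fun k _ => mul_nonneg (hA.1 j k) (hw.1 k)
  · rw [Finset.sum_comm]
    have : ∀ k, ∑ j : Fin 3, A j k * w k = w k := by
      intro k; rw [← Finset.sum_mul, hA.2 k, one_mul]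
    rw [Finset.sum_congr rfl fun k _ => this k, hw.2]

lemma col_mem_stdS {A : M3} (hA : colS A) (j : Fin 3) : (fun k => A k j) ∈ stdS :=
  ⟨fun k => hA.1 k j, hA.2 j⟩


lemma top_row {A : M3} (hA : colS A) (j : Fin 3) : (Vmat * A) 0 j = 1 := by
  rw [Matrix.mul_apply]
  have h : ∀ k : Fin 3, Vmat 0 k = 1 := by
    intro k; fin_cases k <;> norm_num [Vmat]
  calc ∑ k, Vmat 0 k * A k j = ∑ k, A k j := by
        refine Finset.sum_congr rfl fun k _ => ?_
        rw [h k, one_mul]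
  _ = 1 := hA.2 j

lemma projPt_col {A : M3} (hA : colS A) (j : Fin 3) :
    (projPt fun k => (Vmat * A) k j) = ((Vmat * A) 1 j, (Vmat * A) 2 j) := by
  rw [projPt, top_row hA j, div_one, div_one]

lemma memTri {A : M3} (hA : colS A) {w : Fin 3 → ℝ} (hw : w ∈ stdS) :
    ((Vmat * A).mulVec w 1, (Vmat * A).mulVec w 2) ∈
      convexHull ℝ (Set.range fun j : Fin 3 => projPt fun k => (Vmat * A) k j) := by
  have hmem := Finset.centerMass_mem_convexHull (t := Finset.univ) (w := w)
    (z := fun j : Fin 3 => projPt fun k => (Vmat * A) k j)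
    (fun j _ => hw.1 j) (by rw [hw.2]; norm_num)
    (fun j _ => Set.mem_range_self j)
  convert hmem using 1
  rw [Finset.centerMass, hw.2, inv_one, one_smul]
  have hz : ∀ j : Fin 3, (projPt fun k => (Vmat * A) k j)
      = ((Vmat * A) 1 j, (Vmat * A) 2 j) := fun j => projPt_col hA j
  ext
  · rw [Prod.fst_sum]
    simp only [hz, Prod.smul_mk, smul_eq_mul]
    rw [Matrix.mulVec, dotProduct]
    exact Finset.sum_congr rfl fun j _ => mul_comm _ _
  · rw [Prod.snd_sum]
    simp only [hz, Prod.smul_mk, smul_eq_mul]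
    rw [Matrix.mulVec, dotProduct]
    exact Finset.sum_congr rfl fun j _ => mul_comm _ _

lemma subTri_succ_subset (C : Fin 2 → M3) (hC : ∀ j, colS (C j)) (i : ℕ → Fin 2) (n : ℕ) :
    subTri C i (n + 1) ⊆ subTri C i n := by
  apply convexHull_min _ (convex_convexHull ℝ _)
  rintro x ⟨j, rfl⟩
  have hA := colS_prodSeq C hC i n
  have hAC := colS_prodSeq C hC i (n + 1)
  show projPt (fun k => (Vmat * prodSeq C i (n+1)) k j) ∈ _
  rw [projPt_col hAC j]
  have hcol : ∀ s : Fin 3, (Vmat * prodSeq C i (n+1)) s j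
      = (Vmat * prodSeq C i n).mulVec (fun l => C (i (n+1)) l j) s := by
    intro s
    show (Vmat * (prodSeq C i n * C (i (n+1)))) s j = _
    rw [← mul_assoc, Matrix.mul_apply, Matrix.mulVec, dotProduct]
  rw [hcol 1, hcol 2]
  exact memTri hA (col_mem_stdS (hC (i (n+1))) j)

lemma subTri_antitone (C : Fin 2 → M3) (hC : ∀ j, colS (C j)) (i : ℕ → Fin 2)
    {a b : ℕ} (h : a ≤ b) : subTri C i b ⊆ subTri C i a := by
  induction b with
  | zero => rw [Nat.le_zero.mp h]
  | succ b ih =>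
    rcases Nat.lt_or_ge a (b+1) with h' | h'
    · exact (subTri_succ_subset C hC i b).trans (ih (by omega))
    · rw [Nat.le_antisymm h h']


def castV {n : Type*} (v : n → ℚ) : n → ℝ := fun j => (v j : ℝ)

lemma cast_mulVec {m n : Type*} [Fintype n] (B : Matrix m n ℚ) (v : n → ℚ) :
    (B.map (fun x => (x : ℝ))).mulVec (castV v) = castV (B.mulVec v) := by
  funext j
  simp only [Matrix.mulVec, dotProduct, Matrix.map_apply, castV]
  push_cast
  rfl

lemma gram_ker {m n : Type*} [Fintype m] [Fintype n] (Br : Matrix m n ℝ) (v : n → ℝ)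
    (h : (Brᵀ * Br).mulVec v = 0) : Br.mulVec v = 0 := by
  have hdot : Br.mulVec v ⬝ᵥ Br.mulVec v = 0 := by
    have h1 : v ⬝ᵥ (Brᵀ * Br).mulVec v = 0 := by rw [h]; simp
    rwa [← Matrix.mulVec_mulVec, dotProduct_mulVec, Matrix.vecMul_transpose] at h1
  funext j
  have hsum : ∑ k, Br.mulVec v k * Br.mulVec v k = 0 := hdot
  have := (Finset.sum_eq_zero_iff_of_nonneg
    (fun k _ => mul_self_nonneg (Br.mulVec v k))).mp hsum j (Finset.mem_univ j)
  exact mul_self_eq_zero.mp this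

/-- A rational linear system with a unique real solution has that solution rational. -/
lemma unique_sol_rat {m : Type*} [Fintype m] (B : Matrix m (Fin 3) ℚ) (c : m → ℚ)
    (w : Fin 3 → ℝ)
    (hsol : (B.map (fun x => (x : ℝ))).mulVec w = castV c)
    (huniq : ∀ u, (B.map (fun x => (x : ℝ))).mulVec u = castV c → u = w) :
    ∃ wq : Fin 3 → ℚ, castV wq = w := by
  set Br := B.map (fun x => (x : ℝ)) with hBr
  have hmapT : Bᵀ.map (fun x => (x : ℝ)) = Brᵀ := by
    funext i j; simp [Matrix.map_apply, Matrix.transpose_apply, hBr]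
  have hker : ∀ v : Fin 3 → ℝ, Br.mulVec v = 0 → v = 0 := by
    intro v hv
    have h1 : Br.mulVec (w + v) = castV c := by
      rw [Matrix.mulVec_add, hv, add_zero, hsol]
    have := huniq (w + v) h1
    have : v = (w + v) - w := by ring
    rw [this, huniq (w + v) h1]
    ring
  set G : Matrix (Fin 3) (Fin 3) ℚ := Bᵀ * B with hG
  have hGr : G.map (fun x => (x : ℝ)) = Brᵀ * Br := by
    ext i j
    simp only [Matrix.map_apply, hG, Matrix.mul_apply, Matrix.transpose_apply, hBr]
    push_cast
    rfl
  have hdet : G.det ≠ 0 := by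
    intro h0
    obtain ⟨v, hv0, hv⟩ := Matrix.exists_mulVec_eq_zero_iff.mpr h0
    have hvr : (Brᵀ * Br).mulVec (castV v) = 0 := by
      rw [← hGr, cast_mulVec, hv]
      funext j; simp [castV]
    have := hker _ (gram_ker Br (castV v) hvr)
    apply hv0
    funext j
    have := congrFun this j
    simpa [castV] using this
  have hGu : IsUnit G.det := isUnit_iff_ne_zero.mpr hdet
  refine ⟨G⁻¹.mulVec (Bᵀ.mulVec c), ?_⟩
  have hq : G.mulVec (G⁻¹.mulVec (Bᵀ.mulVec c)) = Bᵀ.mulVec c := by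
    rw [Matrix.mulVec_mulVec, Matrix.mul_nonsing_inv _ hGu, Matrix.one_mulVec]
  -- real versions
  have hR : (Brᵀ * Br).mulVec (castV (G⁻¹.mulVec (Bᵀ.mulVec c))) = castV (Bᵀ.mulVec c) := by
    rw [← hGr, cast_mulVec, hq]
  have hRw : (Brᵀ * Br).mulVec w = castV (Bᵀ.mulVec c) := by
    rw [← Matrix.mulVec_mulVec, hsol, ← hmapT, cast_mulVec]
  have hz : (Brᵀ * Br).mulVec (castV (G⁻¹.mulVec (Bᵀ.mulVec c)) - w) = 0 := by
    rw [Matrix.mulVec_sub, hR, hRw, sub_self]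
  have := hker _ (gram_ker Br _ hz)
  have := sub_eq_zero.mp this
  exact this


lemma continuous_mulVec (A : M3) : Continuous fun u : Fin 3 → ℝ => A.mulVec u := by
  refine continuous_pi fun s => ?_
  simp only [Matrix.mulVec, dotProduct]
  exact continuous_finset_sum _ fun j _ => continuous_const.mul (continuous_apply j)

lemma colS_pow {A : M3} (hA : colS A) (m : ℕ) : colS (A ^ m) := by
  induction m with
  | zero => rw [pow_zero]; exact colS_one
  | succ m ih => rw [pow_succ]; exact colS_mul ih hA


end TriAux


open TriAux in
/-- If an eventually periodic barycentric TRIP sequence has its nested triangles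
converge to a single point (α, β), then α and β are rational. -/
theorem stmt3 (p q r : Equiv.Perm (Fin 3)) (i : ℕ → Fin 2)
    (hper : ∃ k : ℕ, 1 ≤ k ∧ ∃ per : ℕ, 1 ≤ per ∧ ∀ n : ℕ, k ≤ n → i (n + per) = i n)
    (α β : ℝ)
    (hpoint : (⋂ n : ℕ, subTri (Gtrip (permMat p) (permMat q) (permMat r)) i (n + 1))
      = {(α, β)}) :
    (∃ a : ℚ, (a : ℝ) = α) ∧ (∃ b : ℚ, (b : ℝ) = β) := by
  classical
  obtain ⟨k, hk1, per, hper1, hper⟩ := hper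
  set C := Gtrip (permMat p) (permMat q) (permMat r) with hCdef
  have hCS : ∀ j, colS (C j) := colS_Gtrip p q r
  set P := prodSeq C i k with hPdef
  set Mb := prodSeq C (fun n => i (k + n)) per with hMbdef
  have hPS : colS P := colS_prodSeq C hCS i k
  have hMbS : colS Mb := colS_prodSeq C hCS _ per
  -- injectivity on the sum-1 slice
  have hVPdet : (Vmat * P).det ≠ 0 := by
    rw [Matrix.det_mul]
    have hV : Vmat.det = 1 := by
      rw [Vmat, Matrix.det_fin_three]; norm_num [Matrix.vecHead, Matrix.vecTail, Matrix.cons_val_two, Matrix.vecHead, Matrix.vecTail]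
    rw [hV, one_mul]
    exact det_prodSeq_ne C (det_Gtrip_ne p q r) i k
  have hinj : ∀ w w' : Fin 3 → ℝ, (∑ j, w j) = (∑ j, w' j) →
      (Vmat * P).mulVec w 1 = (Vmat * P).mulVec w' 1 →
      (Vmat * P).mulVec w 2 = (Vmat * P).mulVec w' 2 → w = w' := by
    intro w w' hs h1 h2
    have h0 : ∀ u : Fin 3 → ℝ, (Vmat * P).mulVec u 0 = ∑ j, u j := by
      intro u
      show ∑ j, (Vmat * P) 0 j * u j = _
      exact Finset.sum_congr rfl fun j _ => by rw [top_row hPS j, one_mul]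
    have hvv : (Vmat * P).mulVec w = (Vmat * P).mulVec w' := by
      funext s
      fin_cases s
      · show (Vmat * P).mulVec w 0 = (Vmat * P).mulVec w' 0
        rw [h0, h0, hs]
      · exact h1
      · exact h2
    have hu : IsUnit (Vmat * P).det := isUnit_iff_ne_zero.mpr hVPdet
    calc w = ((Vmat * P)⁻¹ * (Vmat * P)).mulVec w := by
            rw [Matrix.nonsing_inv_mul _ hu, Matrix.one_mulVec]
    _ = ((Vmat * P)⁻¹ * (Vmat * P)).mulVec w' := by
            rw [← Matrix.mulVec_mulVec, hvv, Matrix.mulVec_mulVec]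
    _ = w' := by rw [Matrix.nonsing_inv_mul _ hu, Matrix.one_mulVec]
  -- the key lemma
  set K : ℕ → Set (Fin 3 → ℝ) := fun m => (Mb ^ m).mulVec '' stdS with hKdef
  have hkey : ∀ x : Fin 3 → ℝ, (∀ m : ℕ, x ∈ K m) →
      ((Vmat * P).mulVec x 1, (Vmat * P).mulVec x 2) = (α, β) := by
    intro x hx
    have hmem : ((Vmat * P).mulVec x 1, (Vmat * P).mulVec x 2)
        ∈ ⋂ n : ℕ, subTri C i (n + 1) := by
      refine Set.mem_iInter.mpr fun n => ?_
      obtain ⟨u, hu, hxu⟩ := hx (n + 1)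
      set m := n + 1
      have hA : colS (prodSeq C i (k + m * per)) := colS_prodSeq C hCS i _
      have hVA : Vmat * prodSeq C i (k + m * per) = (Vmat * P) * Mb ^ m := by
        rw [prodSeq_periodic C hper m, ← hPdef, ← hMbdef, mul_assoc]
      have heq : ∀ s, (Vmat * prodSeq C i (k + m * per)).mulVec u s
          = (Vmat * P).mulVec x s := by
        intro s
        rw [hVA, ← Matrix.mulVec_mulVec, hxu]
      have := memTri hA hu
      rw [heq 1, heq 2] at this
      have hsub : subTri C i (k + m * per) ⊆ subTri C i (n + 1) :=
        subTri_antitone C hCS i (by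
          have : m * per ≥ m := Nat.le_mul_of_pos_right m hper1
          omega)
      exact hsub this
    rw [hpoint] at hmem
    exact hmem
  -- fixed point
  have hKsub : ∀ m, K (m + 1) ⊆ K m := by
    intro m x hx
    obtain ⟨u, hu, hxu⟩ := hx
    refine ⟨Mb.mulVec u, mulVec_mem_stdS hMbS hu, ?_⟩
    rw [Matrix.mulVec_mulVec, ← pow_succ, hxu]
  have hKne : ∀ m, (K m).Nonempty := by
    intro m
    have hS : (fun j : Fin 3 => (1:ℝ)/3) ∈ stdS := by
      constructor
      · intro j; norm_num
      · rw [Fin.sum_univ_three]; norm_num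
    exact ⟨_, _, hS, rfl⟩
  have hKcomp : ∀ m, IsCompact (K m) :=
    fun m => isCompact_stdS.image (continuous_mulVec _)
  obtain ⟨w, hw⟩ := IsCompact.nonempty_iInter_of_sequence_nonempty_isCompact_isClosed
    K hKsub hKne (hKcomp 0) (fun m => (hKcomp m).isClosed)
  have hwK : ∀ m, w ∈ K m := Set.mem_iInter.mp hw
  have hwS : w ∈ stdS := by
    obtain ⟨u, hu, hxu⟩ := hwK 0
    rw [← hxu, pow_zero, Matrix.one_mulVec]
    exact hu
  have hMwK : ∀ m, Mb.mulVec w ∈ K m := by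
    intro m
    apply hKsub m
    obtain ⟨u, hu, hxu⟩ := hwK m
    refine ⟨u, hu, ?_⟩
    rw [← hxu, Matrix.mulVec_mulVec, ← pow_succ']
  have hMwS : Mb.mulVec w ∈ stdS := mulVec_mem_stdS hMbS hwS
  have hfix : Mb.mulVec w = w := by
    have h1 := hkey w hwK
    have h2 := hkey (Mb.mulVec w) hMwK
    rw [Prod.mk.injEq] at h1 h2
    exact hinj _ _ (by rw [hMwS.2, hwS.2]) (h2.1.trans h1.1.symm) (h2.2.trans h1.2.symm)
  have hfixpow : ∀ m, (Mb ^ m).mulVec w = w := by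
    intro m
    induction m with
    | zero => rw [pow_zero, Matrix.one_mulVec]
    | succ m ih => rw [pow_succ', ← Matrix.mulVec_mulVec, ih, hfix]
  -- uniqueness among fixed points in the simplex
  have huniqS : ∀ u, u ∈ stdS → Mb.mulVec u = u → u = w := by
    intro u huS hufix
    have hufixpow : ∀ m, (Mb ^ m).mulVec u = u := by
      intro m
      induction m with
      | zero => rw [pow_zero, Matrix.one_mulVec]
      | succ m ih => rw [pow_succ', ← Matrix.mulVec_mulVec, ih, hufix]
    have huK : ∀ m, u ∈ K m := fun m => ⟨u, huS, hufixpow m⟩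
    have h1 := hkey u huK
    have h2 := hkey w hwK
    rw [Prod.mk.injEq] at h1 h2
    exact hinj _ _ (by rw [huS.2, hwS.2]) (h1.1.trans h2.1.symm) (h1.2.trans h2.2.symm)
  -- uniqueness for the linear system (perturbation argument)
  have huniqSys : ∀ u : Fin 3 → ℝ, Mb.mulVec u = u → (∑ j, u j) = 1 →
      (∀ j, w j = 0 → u j = 0) → u = w := by
    intro u hufix husum huzero
    set g : Fin 3 → ℝ := fun j => if w j = 0 then 1 else w j / (w j + |u j|) with hgdef
    have hgpos : ∀ j, 0 < g j := by
      intro j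
      simp only [hgdef]
      by_cases h : w j = 0
      · rw [if_pos h]; norm_num
      · rw [if_neg h]
        have hwj : 0 < w j := lt_of_le_of_ne (hwS.1 j) (Ne.symm h)
        exact div_pos hwj (by positivity)
    have hgle : ∀ j, g j ≤ 1 := by
      intro j
      simp only [hgdef]
      by_cases h : w j = 0
      · rw [if_pos h]
      · rw [if_neg h]
        have hwj : 0 < w j := lt_of_le_of_ne (hwS.1 j) (Ne.symm h)
        rw [div_le_one (by positivity)]
        have := abs_nonneg (u j)
        linarith
    set t : ℝ := min (g 0) (min (g 1) (g 2)) with htdef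
    have htpos : 0 < t := lt_min (hgpos 0) (lt_min (hgpos 1) (hgpos 2))
    have htle1 : t ≤ 1 := le_trans (min_le_left _ _) (hgle 0)
    have htleg : ∀ j, t ≤ g j := by
      intro j
      fin_cases j
      · exact min_le_left _ _
      · exact le_trans (min_le_right _ _) (min_le_left _ _)
      · exact le_trans (min_le_right _ _) (min_le_right _ _)
    set v : Fin 3 → ℝ := (1 - t) • w + t • u with hvdef
    have hvS : v ∈ stdS := by
      constructor
      · intro j
        by_cases h : w j = 0
        · have : u j = 0 := huzero j h
          simp [hvdef, h, this]
        · have hwj : 0 < w j := lt_of_le_of_ne (hwS.1 j) (Ne.symm h)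
          have ht : t ≤ w j / (w j + |u j|) := by
            have h2 := htleg j
            simp only [hgdef] at h2
            rwa [if_neg h] at h2
          have ht2 : t * (w j + |u j|) ≤ w j := by
            rw [← le_div_iff₀ (by positivity)]
            exact ht
          have hvj : v j = w j - t * (w j - u j) := by
            simp only [hvdef, Pi.add_apply, Pi.smul_apply, smul_eq_mul]
            ring
          rw [hvj]
          have habs : w j - u j ≤ w j + |u j| := by
            have := neg_abs_le (u j)
            linarith
          nlinarith
      · have : ∑ j, v j = (1 - t) * (∑ j, w j) + t * (∑ j, u j) := by
          simp only [hvdef, Pi.add_apply, Pi.smul_apply, smul_eq_mul]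
          rw [Finset.sum_add_distrib, ← Finset.mul_sum, ← Finset.mul_sum]
        rw [this, hwS.2, husum]
        ring
    have hvfix : Mb.mulVec v = v := by
      rw [hvdef, Matrix.mulVec_add, Matrix.mulVec_smul, Matrix.mulVec_smul, hfix, hufix]
    have hveq : v = w := huniqS v hvS hvfix
    funext j
    have := congrFun hveq j
    simp only [hvdef, Pi.add_apply, Pi.smul_apply, smul_eq_mul] at this
    have ht' : t ≠ 0 := ne_of_gt htpos
    have : t * (u j - w j) = 0 := by linarith
    rcases mul_eq_zero.mp this with h | h
    · exact absurd h ht'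
    · linarith
  -- rational matrices
  obtain ⟨Mbq, hMbq⟩ : isRat Mb := isRat_prodSeq C (isRat_Gtrip p q r) _ per
  obtain ⟨VPq, hVPq⟩ : isRat (Vmat * P) := by
    refine isRat_mul ⟨!![1,1,1; 0,1,1; 0,0,1], ?_⟩ (isRat_prodSeq C (isRat_Gtrip p q r) i k)
    ext s j
    fin_cases s <;> fin_cases j <;> norm_num [Vmat]
  -- the linear system
  set ι := Sum (Fin 3) (Sum Unit (Fin 3))
  set B : Matrix ι (Fin 3) ℚ := Matrix.of fun s j =>
    match s with
    | Sum.inl s => Mbq s j - (if s = j then 1 else 0)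
    | Sum.inr (Sum.inl _) => 1
    | Sum.inr (Sum.inr l) => if w l = 0 ∧ j = l then 1 else 0
    with hBdef
  set c : ι → ℚ := fun s =>
    match s with
    | Sum.inl _ => 0
    | Sum.inr (Sum.inl _) => 1
    | Sum.inr (Sum.inr _) => 0
    with hcdef
  have hBrow : ∀ (x : Fin 3 → ℝ) (s : ι), (B.map (fun y => (y:ℝ))).mulVec x s =
      match s with
      | Sum.inl s => Mb.mulVec x s - x s
      | Sum.inr (Sum.inl _) => ∑ j, x j
      | Sum.inr (Sum.inr l) => if w l = 0 then x l else 0 := by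
    intro x s
    rcases s with s | s | l
    · show (∑ j, ((Mbq s j - if s = j then 1 else 0 : ℚ) : ℝ) * x j)
          = Mb.mulVec x s - x s
      have : ∀ j, ((Mbq s j - if s = j then 1 else 0 : ℚ) : ℝ) * x j
          = Mb s j * x j - (if s = j then x j else 0) := by
        intro j
        rw [← hMbq]
        push_cast
        by_cases h : s = j <;> simp [h, Matrix.map_apply] <;> ring
      rw [Finset.sum_congr rfl fun j _ => this j, Finset.sum_sub_distrib,
        Finset.sum_ite_eq Finset.univ s x]
      simp [Matrix.mulVec, dotProduct]
    · show (∑ j, ((1:ℚ):ℝ) * x j) = ∑ j, x j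
      simp
    · show (∑ j, ((if w l = 0 ∧ j = l then (1:ℚ) else 0 : ℚ) : ℝ) * x j)
          = if w l = 0 then x l else 0
      by_cases h : w l = 0
      · have : ∀ j, ((if w l = 0 ∧ j = l then (1:ℚ) else 0 : ℚ) : ℝ) * x j
            = if j = l then x j else 0 := by
          intro j
          by_cases h2 : j = l <;> simp [h, h2]
        rw [Finset.sum_congr rfl fun j _ => this j, if_pos h,
          Finset.sum_ite_eq' Finset.univ l x, if_pos (Finset.mem_univ l)]
      · have : ∀ j, ((if w l = 0 ∧ j = l then (1:ℚ) else 0 : ℚ) : ℝ) * x j = 0 := by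
          intro j; simp [h]
        rw [Finset.sum_congr rfl fun j _ => this j, if_neg h]
        simp
  have hsol : (B.map (fun y => (y:ℝ))).mulVec w = castV c := by
    funext s
    rw [hBrow w s]
    rcases s with s | s | l
    · show Mb.mulVec w s - w s = ((0:ℚ):ℝ)
      rw [hfix]; simp
    · show (∑ j, w j) = ((1:ℚ):ℝ)
      rw [hwS.2]; simp
    · show (if w l = 0 then w l else 0) = ((0:ℚ):ℝ)
      by_cases h : w l = 0 <;> simp [h]
  have huniq : ∀ u, (B.map (fun y => (y:ℝ))).mulVec u = castV c → u = w := by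
    intro u hu
    have h1 : Mb.mulVec u = u := by
      funext s
      have := congrFun hu (Sum.inl s)
      rw [hBrow u (Sum.inl s)] at this
      have : Mb.mulVec u s - u s = 0 := by simpa [castV, hcdef] using this
      linarith
    have h2 : (∑ j, u j) = 1 := by
      have := congrFun hu (Sum.inr (Sum.inl ()))
      rw [hBrow u (Sum.inr (Sum.inl ()))] at this
      simpa [castV, hcdef] using this
    have h3 : ∀ l, w l = 0 → u l = 0 := by
      intro l hl
      have := congrFun hu (Sum.inr (Sum.inr l))
      rw [hBrow u (Sum.inr (Sum.inr l))] at this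
      simpa [castV, hcdef, hl] using this
    exact huniqSys u h1 h2 h3
  obtain ⟨wq, hwq⟩ := unique_sol_rat B c w hsol huniq
  -- conclude
  have hαβ := hkey w hwK
  have hcast : (Vmat * P).mulVec w = castV (VPq.mulVec wq) := by
    rw [← hwq, ← hVPq]
    funext s
    simp only [Matrix.mulVec, dotProduct, Matrix.map_apply, castV]
    push_cast
    rfl
  rw [Prod.mk.injEq] at hαβ
  constructor
  · exact ⟨VPq.mulVec wq 1, by rw [← hαβ.1, hcast]; rfl⟩
  · exact ⟨VPq.mulVec wq 2, by rw [← hαβ.2, hcast]; rfl⟩
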